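/- For every 1 ≤ i ≤ n one has β_i^+ + Σ_{j<i} a_{ji} β_j^+ = e_i. Equivalently, in the root lattice of a generalized Cartan matrix A, the roots β_i^+ = s_1⋯s_{i−1}α_i satisfy s_1⋯s_{i−1}α_i + Σ_{j<i} a_{ji}·s_1⋯s_{j−1}α_j = α_i. -/

import Mathlib

open Finset

/-- The simple reflection `s_i` of the Weyl group of `A` acting on the root lattice
in the basis of simple roots: `R_i(e_j) = e_j - a_{ij} e_i`. -/
def Rmap {n : ℕ} (A : Matrix (Fin n) (Fin n) ℤ) (i : Fin n) (v : Fin n → ℤ) : Fin n → ℤ :=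
  v - (∑ j, A i j * v j) • Pi.single i (1 : ℤ)

/-- `R` indexed by a natural number (acting trivially out of range). -/
def Rnat {n : ℕ} (A : Matrix (Fin n) (Fin n) ℤ) (j : ℕ) (v : Fin n → ℤ) : Fin n → ℤ :=
  if h : j < n then Rmap A ⟨j, h⟩ v else v

/-- `β_i^+ = s_1 ⋯ s_{i-1} α_i` in simple root coordinates (indices 0-based:
`β_i^+ = R_0 (R_1 (⋯ (R_{i-1} e_i)))`). -/
def betaPlus {n : ℕ} (A : Matrix (Fin n) (Fin n) ℤ) (i : Fin n) : Fin n → ℤ :=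
  (List.range i.val).foldr (fun j v => Rnat A j v) (Pi.single i (1 : ℤ))

lemma Rmap_sub_smul {n : ℕ} (A : Matrix (Fin n) (Fin n) ℤ) (j : Fin n) (c : ℤ)
    (v w : Fin n → ℤ) :
    Rmap A j (v - c • w) = Rmap A j v - c • Rmap A j w := by
  have hs : (∑ l, A j l * (v l - c * w l)) = (∑ l, A j l * v l) - c * ∑ l, A j l * w l := by
    rw [Finset.mul_sum, ← Finset.sum_sub_distrib]; congr 1; funext l; ring
  funext x
  simp only [Rmap, Pi.sub_apply, Pi.smul_apply, smul_eq_mul]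
  rw [hs]
  ring

lemma foldr_sub_smul {n : ℕ} (A : Matrix (Fin n) (Fin n) ℤ) (l : List ℕ) (c : ℤ)
    (v w : Fin n → ℤ) :
    l.foldr (fun j v => Rnat A j v) (v - c • w)
      = l.foldr (fun j v => Rnat A j v) v - c • l.foldr (fun j v => Rnat A j v) w := by
  induction l with
  | nil => rfl
  | cons a t ih =>
    simp only [List.foldr_cons]
    rw [ih]
    simp only [Rnat]
    split
    · exact Rmap_sub_smul ..
    · rfl

lemma key {n : ℕ} (A : Matrix (Fin n) (Fin n) ℤ) (i : Fin n) (k : ℕ) (hk : k ≤ i.val) :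
    (List.range k).foldr (fun j v => Rnat A j v) (Pi.single i (1 : ℤ))
      + ∑ j ∈ Finset.univ.filter (fun j : Fin n => j.val < k), A j i • betaPlus A j
      = Pi.single i (1 : ℤ) := by
  induction k with
  | zero => simp
  | succ k ih =>
    have hkn : k < n := lt_of_le_of_lt (Nat.le_of_succ_le hk) i.isLt
    set kf : Fin n := ⟨k, hkn⟩
    have hki : kf ≠ i := by
      intro h
      have := congrArg Fin.val h
      simp [kf] at this
      omega
    have hRnat : Rnat A k (Pi.single i (1 : ℤ))
        = Pi.single i (1 : ℤ) - A kf i • Pi.single kf (1 : ℤ) := by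
      simp only [Rnat, dif_pos hkn, Rmap]
      congr 1
      rw [Finset.sum_eq_single i]
      · simp [kf]
      · intro b _ hb; simp [Pi.single_apply, hb]
      · simp
    have hfold : (List.range (k+1)).foldr (fun j v => Rnat A j v) (Pi.single i (1 : ℤ))
        = (List.range k).foldr (fun j v => Rnat A j v) (Pi.single i (1 : ℤ))
          - A kf i • betaPlus A kf := by
      rw [List.range_succ, List.foldr_append]
      simp only [List.foldr_cons, List.foldr_nil, hRnat]
      rw [foldr_sub_smul]
      rfl
    have hfilter : Finset.univ.filter (fun j : Fin n => j.val < k + 1)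
        = insert kf (Finset.univ.filter (fun j : Fin n => j.val < k)) := by
      ext j
      simp [Fin.ext_iff, kf]
      omega
    rw [hfold, hfilter, Finset.sum_insert (by simp [kf])]
    have := ih (le_trans (Nat.le_succ k) hk)
    linear_combination (norm := abel) this

theorem statement0 (n : ℕ) (hn : 1 ≤ n) (A : Matrix (Fin n) (Fin n) ℤ) (i : Fin n) :
    betaPlus A i + ∑ j ∈ Finset.univ.filter (fun j => j < i), A j i • betaPlus A j
      = Pi.single i (1 : ℤ) := by
  have h := key A i i.val le_rfl
  exact h
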